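/- Let F be a field which is a module over a characteristic-0 principal ideal domain R, and let d ≤ n. Then 𝒯 is faithful both as a left T^Z(n,d)-supermodule and as a right T^{Z'}(n,d)-supermodule. -/

import Mathlib

open scoped BigOperators
open Finsupp

set_option maxHeartbeats 1000000

namespace Paper

noncomputable section

variable (K : Type) [CommRing K]

/-- Coordinate model for the `d`-th tensor power `V^{⊗ d}` of a free module `V`
with basis indexed by `β`: the basis of `V^{⊗ d}` is indexed by `d`-tuples in `β`. -/
abbrev TPow (β : Type) (d : ℕ) : Type := (Fin d → β) →₀ K

variable {β : Type} [Fintype β] [DecidableEq β]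

/-- The tensor product `v 0 ⊗ v 1 ⊗ ⋯ ⊗ v (d-1)` of vectors written in coordinates. -/
def tensorOf {d : ℕ} (v : Fin d → (β →₀ K)) : TPow K β d :=
  ∑ k ∈ Fintype.piFinset (fun i => (v i).support),
    (∏ i, (v i) (k i)) • Finsupp.single k (1 : K)

/-- parity of a `Fin 3`-valued part marker: `0 = 𝔞`, `1 = 𝔠` (both even), `2 = odd`. -/
def par2 (x : Fin 3) : ZMod 2 := if x = 2 then 1 else 0

/-- total parity of a basis tuple -/
def tupleParity (p : β → Fin 3) {d : ℕ} (k : Fin d → β) : ZMod 2 := ∑ i, par2 (p (k i))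

/-- the even part of the tensor power (span of basis tuples of even total parity) -/
def evenPart (p : β → Fin 3) (d : ℕ) : Submodule K (TPow K β d) :=
  Finsupp.supported K K {k | tupleParity p k = 0}

/-- the odd part of the tensor power -/
def oddPart (p : β → Fin 3) (d : ℕ) : Submodule K (TPow K β d) :=
  Finsupp.supported K K {k | tupleParity p k = 1}

/-- the sign count `⟨σ; v⟩` for the signed place-permutation action -/
def permSign (p : β → Fin 3) {d : ℕ} (σ : Equiv.Perm (Fin d)) (k : Fin d → β) : ℕ :=
  (Finset.univ.filter fun q : Fin d × Fin d =>
     q.1 < q.2 ∧ σ⁻¹ q.2 < σ⁻¹ q.1 ∧ p (k q.1) = 2 ∧ p (k q.2) = 2).card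

/-- the signed place-permutation action of `σ ∈ S_d` on `V^{⊗ d}` -/
def permAct (p : β → Fin 3) {d : ℕ} (σ : Equiv.Perm (Fin d)) :
    TPow K β d →ₗ[K] TPow K β d :=
  Finsupp.lsum K fun k => LinearMap.toSpanSingleton K _
    (((-1 : K) ^ permSign p σ k) • Finsupp.single (k ∘ σ) (1 : K))

/-- the divided power `Γ^d V`: invariants of the signed place-permutation action -/
def Gamma (p : β → Fin 3) (d : ℕ) : Submodule K (TPow K β d) :=
  ⨅ σ : Equiv.Perm (Fin d), LinearMap.eqLocus (permAct K p σ) LinearMap.id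

/-- A calibrated family of vectors of the "supermodule" `β →₀ K`: an index set `ι`
with a partition into `𝔞`- (`part = 0`), `𝔠`- (`part = 1`) and odd (`part = 2`) parts,
a total order (realized through an `ℕ`-encoding `ord`) and the actual vectors `vec`. -/
structure CalFamily (β : Type) : Type 1 where
  ι : Type
  fin : Fintype ι
  deq : DecidableEq ι
  part : ι → Fin 3
  ord : ι → ℕ
  vec : ι → (β →₀ K)

attribute [instance] CalFamily.fin CalFamily.deq

namespace CalFamily

variable {K}
variable (F : CalFamily K β)

/-- `Seq(B,d)`: tuples in which an entry may repeat only if it is even -/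
def IsSeq {d : ℕ} (b : Fin d → F.ι) : Prop :=
  ∀ i j : Fin d, i ≠ j → b i = b j → F.part (b i) ≠ 2

/-- the inversion count `⟨b⟩` among odd entries -/
def inversions {d : ℕ} (b : Fin d → F.ι) : ℕ :=
  (Finset.univ.filter fun q : Fin d × Fin d =>
    q.1 < q.2 ∧ F.part (b q.1) = 2 ∧ F.part (b q.2) = 2 ∧ F.ord (b q.2) < F.ord (b q.1)).card

/-- the `S_d`-orbit of a tuple -/
def orbit {d : ℕ} (b : Fin d → F.ι) : Finset (Fin d → F.ι) :=
  Finset.univ.filter fun b' => ∃ σ : Equiv.Perm (Fin d), b' = b ∘ σ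

/-- the element `x_b ∈ Γ^d V` -/
def x {d : ℕ} (b : Fin d → F.ι) : TPow K β d :=
  ∑ b' ∈ F.orbit b,
    ((-1 : K) ^ (F.inversions b + F.inversions b')) • tensorOf K (fun i => F.vec (b' i))

/-- the factorial `[b]^!_𝔠` -/
def mfac {d : ℕ} (b : Fin d → F.ι) : ℕ :=
  ∏ c ∈ Finset.univ.filter (fun c : F.ι => F.part c = 1),
    (Finset.univ.filter fun i : Fin d => b i = c).card.factorial

/-- the element `y_b = [b]^!_𝔠 • x_b` -/
def y {d : ℕ} (b : Fin d → F.ι) : TPow K β d := F.mfac b • F.x b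

end CalFamily

/-- the modified divided power `Γ̃^d V`, as a submodule of the coordinate tensor power -/
def gammaTilde (F : CalFamily K β) (d : ℕ) : Submodule K (TPow K β d) :=
  Submodule.span K {w | ∃ b : Fin d → F.ι, F.IsSeq b ∧ w = F.y b}

/-- the standard calibrated family: the basis of `β →₀ K` given by `β` itself -/
def stdFam (p : β → Fin 3) (ord : β → ℕ) : CalFamily K β :=
  ⟨β, inferInstance, inferInstance, p, ord, fun b => Finsupp.single b 1⟩

/-- the Koszul sign `⟨a, v⟩ = #{(k,l) | k > l, a_k odd, v_l odd}` -/
def koszul {α : Type} (pA : α → Fin 3) (pV : β → Fin 3) {d : ℕ}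
    (a : Fin d → α) (k : Fin d → β) : ℕ :=
  (Finset.univ.filter fun q : Fin d × Fin d =>
    q.2 < q.1 ∧ pA (a q.1) = 2 ∧ pV (k q.2) = 2).card

/-- the (left) action of an element `x` of the `d`-th tensor power of a superalgebra `A`
(with basis `α` and structure constants `act`) on the `d`-th tensor power of a
supermodule with basis `β`, including Koszul signs. -/
def kact {α : Type} [Fintype α] [DecidableEq α]
    (pA : α → Fin 3) (pV : β → Fin 3) (act : α → β → (β →₀ K)) {d : ℕ}
    (x : TPow K α d) : TPow K β d →ₗ[K] TPow K β d :=
  Finsupp.lsum K fun k => LinearMap.toSpanSingleton K _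
    (x.sum fun a r => (r * (-1 : K) ^ koszul pA pV a k) • tensorOf K (fun i => act (a i) (k i)))

/-- the right action analogue of `kact` (for right supermodules), `v ↦ v · x` -/
def rkact {α : Type} [Fintype α] [DecidableEq α]
    (pA : α → Fin 3) (pV : β → Fin 3) (ract : β → α → (β →₀ K)) {d : ℕ}
    (x : TPow K α d) : TPow K β d →ₗ[K] TPow K β d :=
  Finsupp.lsum K fun k => LinearMap.toSpanSingleton K _
    (x.sum fun a r => (r * (-1 : K) ^ koszul pV pA k a) • tensorOf K (fun i => ract (k i) (a i)))

/-- shortest coset representatives for `(S_c × S_e) \ S_{c+e}` -/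
def shuffles (c e : ℕ) : Finset (Equiv.Perm (Fin (c + e))) :=
  Finset.univ.filter fun σ =>
    (∀ i j : Fin (c + e), (i : ℕ) < c → (j : ℕ) < c → i < j → σ⁻¹ i < σ⁻¹ j) ∧
    (∀ i j : Fin (c + e), c ≤ (i : ℕ) → c ≤ (j : ℕ) → i < j → σ⁻¹ i < σ⁻¹ j)

/-- the outer (concatenation) product `V^{⊗c} ⊗ V^{⊗e} → V^{⊗(c+e)}`, as a bilinear map -/
def outerL (c e : ℕ) : TPow K β c →ₗ[K] TPow K β e →ₗ[K] TPow K β (c + e) :=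
  Finsupp.lsum K fun k1 => LinearMap.toSpanSingleton K _
    (Finsupp.lsum K fun k2 => LinearMap.toSpanSingleton K _
      (Finsupp.single (Fin.append k1 k2) (1 : K)))

/-- the star product `w1 * w2 = Σ_σ (w1 ⊗ w2)^σ` over shortest coset representatives -/
def starL (p : β → Fin 3) (c e : ℕ) : TPow K β c →ₗ[K] TPow K β e →ₗ[K] TPow K β (c + e) :=
  ∑ σ ∈ shuffles c e, (outerL K c e).compr₂ (permAct K p σ)

/-- cast of a coordinate tensor power along an equality of tensor degrees -/
def castTPow {c d : ℕ} (h : c = d) : TPow K β c →ₗ[K] TPow K β d :=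
  Finsupp.lmapDomain K K (fun k => k ∘ (Fin.cast h.symm))

/-- embedding of coordinates along a map of basis index sets -/
def embTPow {γ : Type} (f : β → γ) (d : ℕ) : TPow K β d →ₗ[K] TPow K γ d :=
  Finsupp.lmapDomain K K (fun k => f ∘ k)

end

end Paper
namespace Paper

noncomputable section

variable (K : Type) [CommRing K]

/-- the index of the `q`-th position of the `p`-th block (blocks ordered via `ow`,
with sizes `c`) inside `Fin d`, `d = Σ c` -/
def blockIdx {ι : Type} [Fintype ι] [DecidableEq ι] (ow : ι → ℕ) (c : ι → ℕ) {d : ℕ}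
    (hd : ∑ p, c p = d) (p : ι) (q : Fin (c p)) : Fin d :=
  ⟨(∑ p' ∈ Finset.univ.filter (fun p' => ow p' < ow p), c p') + (q : ℕ), by
    have hq := q.2
    have hsub : (Finset.univ.filter (fun p' => ow p' < ow p)) ⊆ Finset.univ.erase p := by
      intro x hx
      rcases Finset.mem_filter.mp hx with ⟨_, hlt⟩
      exact Finset.mem_erase.mpr ⟨by intro hxp; rw [hxp] at hlt; exact lt_irrefl _ hlt, Finset.mem_univ x⟩
    have h1 : (∑ p' ∈ Finset.univ.filter (fun p' => ow p' < ow p), c p')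
        ≤ ∑ p' ∈ Finset.univ.erase p, c p' :=
      Finset.sum_le_sum_of_subset hsub
    have h2 := Finset.sum_erase_add Finset.univ c (Finset.mem_univ p)
    omega⟩

/-- iterated outer (concatenation) product of a finite family of tensors,
concatenated in the order given by `ow` -/
def bigOuter {β : Type} [Fintype β] [DecidableEq β] {ι : Type} [Fintype ι] [DecidableEq ι]
    (ow : ι → ℕ) (c : ι → ℕ) {d : ℕ}
    (hd : ∑ p, c p = d) (v : ∀ p : ι, TPow K β (c p)) : TPow K β d :=
  ∑ k : Fin d → β, (∏ p, (v p) (fun q => k (blockIdx ow c hd p q))) • Finsupp.single k (1 : K)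

end

end Paper
namespace Paper

noncomputable section

variable (K : Type) [CommRing K]

/-- bilinear extension of structure constants `f` to the spanned free modules -/
def pairExt {α β γ : Type} (f : α → β → (γ →₀ K)) (x : α →₀ K) (y : β →₀ K) : γ →₀ K :=
  x.sum fun a r => y.sum fun b s => (r * s) • f a b

/-- linear extension of a basis-valued map -/
def oneExt {α γ : Type} (f : α → (γ →₀ K)) (x : α →₀ K) : γ →₀ K :=
  x.sum fun a r => r • f a

variable {β : Type} [Fintype β] [DecidableEq β]

/-- the bilinear form on `β →₀ K` with Gram matrix `G` -/
def formV (G : β → β → K) : (β →₀ K) →ₗ[K] (β →₀ K) →ₗ[K] K :=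
  Finsupp.lsum K fun b => LinearMap.toSpanSingleton K _
    (Finsupp.lsum K fun b' => LinearMap.toSpanSingleton K K (G b b'))

/-- the induced (signed) bilinear form `(·,·)_d` on the `d`-th tensor power -/
def formD (p : β → Fin 3) (G : β → β → K) (d : ℕ) :
    TPow K β d →ₗ[K] TPow K β d →ₗ[K] K :=
  Finsupp.lsum K fun k => LinearMap.toSpanSingleton K _
    (Finsupp.lsum K fun k' => LinearMap.toSpanSingleton K K
      (((-1 : K) ^ koszul p p k k') * ∏ i, G (k i) (k' i)))

end

end Paper
open Classical

namespace Paper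

noncomputable section

/-! ## Combinatorics of multipartitions -/

section Comb

variable (ℓ n : ℕ)

/-- `I`-multicompositions with at most `n` parts, `I = {0,…,ℓ}` -/
abbrev MultiComp := Fin (ℓ+1) → Fin n → ℕ

variable {ℓ n}

def mcSize (μ : MultiComp ℓ n) : ℕ := ∑ i, ∑ r, μ i r

def IsMultiPartition (μ : MultiComp ℓ n) : Prop := ∀ i, Antitone (μ i)

def norms (μ : MultiComp ℓ n) : Fin (ℓ+1) → ℕ := fun i => ∑ r, μ i r

/-- dominance order on compositions -/
def Dominates (lam mu : Fin n → ℕ) : Prop :=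
  ∀ s : Fin n, ∑ r ∈ Finset.univ.filter (· ≤ s), lam r ≤ ∑ r ∈ Finset.univ.filter (· ≤ s), mu r

/-- the order `⊴_I` on `ℤ_{≥0}^I` determined by a partial order `po` on `I` -/
def domI (po : Fin (ℓ+1) → Fin (ℓ+1) → Prop) (a b : Fin (ℓ+1) → ℕ) : Prop :=
  ∀ i, ∑ j ∈ Finset.univ.filter (fun j => po i j), a j ≤
       ∑ j ∈ Finset.univ.filter (fun j => po i j), b j

/-- the order `≤_I` on multicompositions -/
def leI (po : Fin (ℓ+1) → Fin (ℓ+1) → Prop) (lam mu : MultiComp ℓ n) : Prop :=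
  (domI po (norms lam) (norms mu) ∧ norms lam ≠ norms mu) ∨
  (norms lam = norms mu ∧ ∀ i, Dominates (lam i) (mu i))

/-- `ι_i(λ)`: the multicomposition concentrated in component `i` -/
def iotaP (i : Fin (ℓ+1)) (lam : Fin n → ℕ) : MultiComp ℓ n :=
  fun i' => if i' = i then lam else 0

/-- the one-row partition `(m)` -/
def rowP (n m : ℕ) : Fin n → ℕ := fun r => if (r : ℕ) = 0 then m else 0

/-- the one-column partition `(1^m)` -/
def colP (n m : ℕ) : Fin n → ℕ := fun r => if (r : ℕ) < m then 1 else 0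

/-- the conjugate partition -/
def conjP (lam : Fin n → ℕ) : Fin n → ℕ :=
  fun c => (Finset.univ.filter fun r => (c : ℕ) < lam r).card

/-- reversal of the components of a multicomposition -/
def revM (μ : MultiComp ℓ n) : MultiComp ℓ n := fun i => μ i.rev

/-- componentwise conjugate of a multipartition -/
def conjM (μ : MultiComp ℓ n) : MultiComp ℓ n := fun i => conjP (μ i)

/-- componentwise sum of multicompositions -/
def addM (lam mu : MultiComp ℓ n) : MultiComp ℓ n := fun i r => lam i r + mu i r

end Comb

/-! ## Filling tuples (used to construct the idempotents `η_μ`) -/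

def cumSum (c : ℕ → ℕ) (m : ℕ) : ℕ := ∑ m' ∈ Finset.range (m+1), c m'

def fillIdx (c : ℕ → ℕ) (k : ℕ) : ℕ :=
  if h : ∃ m, k < cumSum c m then Nat.find h else 0

def mcFun {ℓ n : ℕ} (μ : MultiComp ℓ n) : ℕ → ℕ := fun m =>
  if h : m < (ℓ+1) * n then
    μ (finProdFinEquiv.symm (⟨m, h⟩ : Fin ((ℓ+1) * n))).1
      (finProdFinEquiv.symm (⟨m, h⟩ : Fin ((ℓ+1) * n))).2
  else 0

def decodeIdx {ℓ n : ℕ} [NeZero n] (m : ℕ) : Fin (ℓ+1) × Fin n :=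
  if h : m < (ℓ+1) * n then finProdFinEquiv.symm ⟨m, h⟩ else ((0 : Fin (ℓ+1)), ⟨0, Nat.pos_of_ne_zero (NeZero.ne n)⟩)

/-- a tuple realizing the multicomposition `μ`, listing the pairs `(i,r)` with
multiplicities `μ i r` in the lexicographic order -/
def etaTuple {ℓ n : ℕ} [NeZero n] (μ : MultiComp ℓ n) (d : ℕ) :
    Fin d → Fin (ℓ+1) × Fin n :=
  fun k => decodeIdx (fillIdx (mcFun μ) k)

/-! ## Generalized Schur algebras presented by a calibrated basis with idempotents -/

/-- The data of a superalgebra `A` over `F` presented by a finite calibrated basis `βA`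
(with `part = 0/1/2` for `𝔞/𝔠/odd`), structure constants `mulA`, distinguished
standard idempotent basis elements `eA i` for `i ∈ I = {0,…,ℓ}`, and a partial
order `po` on `I` (refining nothing in particular here). -/
structure SchurAlgData (F : Type) [CommRing F] (ℓ : ℕ) : Type 1 where
  βA : Type
  finA : Fintype βA
  deqA : DecidableEq βA
  pA : βA → Fin 3
  ordA : βA → ℕ
  mulA : βA → βA → (βA →₀ F)
  eA : Fin (ℓ+1) → βA
  po : Fin (ℓ+1) → Fin (ℓ+1) → Prop

attribute [instance] SchurAlgData.finA SchurAlgData.deqA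

namespace SchurAlgData

variable {F : Type} [CommRing F] {ℓ : ℕ} (S : SchurAlgData F ℓ) (n d : ℕ)

/-- the basis of the matrix superalgebra `M_n(A)` -/
abbrev MBt := S.βA × Fin n × Fin n

def pM : S.MBt n → Fin 3 := fun m => S.pA m.1

def ordM : S.MBt n → ℕ := fun m => (S.ordA m.1 * n + (m.2.1 : ℕ)) * n + (m.2.2 : ℕ)

/-- structure constants of `M_n(A)`: `ξ^b_{rs} ξ^{b'}_{r's'} = δ_{s,r'} (b b')_{r,s'}` -/
def mulM : S.MBt n → S.MBt n → (S.MBt n →₀ F) := fun x y =>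
  if x.2.2 = y.2.1 then Finsupp.mapDomain (fun c => (c, x.2.1, y.2.2)) (S.mulA x.1 y.1)
  else 0

/-- the generalized Schur algebra `T^A(n,d) = Γ̃^d M_n(A)`, in coordinates -/
def alg : Submodule F (TPow F (S.MBt n) d) :=
  gammaTilde F (stdFam F (S.pM n) (S.ordM n)) d

/-- left multiplication by `x` in (the ambient space of) `T^A(n,d)` -/
def amul (x : TPow F (S.MBt n) d) : TPow F (S.MBt n) d →ₗ[F] TPow F (S.MBt n) d :=
  kact F (S.pM n) (S.pM n) (fun a b => S.mulM n a b) x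

/-- right multiplication by `x` (with the appropriate Koszul signs) -/
def ramul (x : TPow F (S.MBt n) d) : TPow F (S.MBt n) d →ₗ[F] TPow F (S.MBt n) d :=
  rkact F (S.pM n) (S.pM n) (fun b a => S.mulM n b a) x

/-- the set of even elements of the ambient space of `T^A(n,d)` -/
def evA : Set (TPow F (S.MBt n) d) := (evenPart F (S.pM n) d : Set _)

/-- the set of odd elements -/
def odA : Set (TPow F (S.MBt n) d) := (oddPart F (S.pM n) d : Set _)

/-- the idempotent `η_μ = η^{e_0}_{μ^{(0)}} * ⋯ * η^{e_ℓ}_{μ^{(ℓ)}} ∈ T^A(n,d)` -/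
def eta [NeZero n] (μ : MultiComp ℓ n) : TPow F (S.MBt n) d :=
  (stdFam F (S.pM n) (S.ordM n)).y
    (fun k => (S.eA (etaTuple μ d k).1, (etaTuple μ d k).2, (etaTuple μ d k).2))

def lStable (N : Submodule F (TPow F (S.MBt n) d)) : Prop :=
  ∀ x ∈ S.alg n d, ∀ v ∈ N, S.amul n d x v ∈ N

def rStable (N : Submodule F (TPow F (S.MBt n) d)) : Prop :=
  ∀ x ∈ S.alg n d, ∀ v ∈ N, S.ramul n d x v ∈ N

/-- the left ideal of `T^A(n,d)` generated by a set -/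
def lIdeal (T : Set (TPow F (S.MBt n) d)) : Submodule F (TPow F (S.MBt n) d) :=
  sInf {N | T ⊆ N ∧ S.lStable n d N}

/-- the right ideal generated by a set -/
def rIdeal (T : Set (TPow F (S.MBt n) d)) : Submodule F (TPow F (S.MBt n) d) :=
  sInf {N | T ⊆ N ∧ S.rStable n d N}

/-- the two-sided ideal generated by a set -/
def tIdeal (T : Set (TPow F (S.MBt n) d)) : Submodule F (TPow F (S.MBt n) d) :=
  sInf {N | T ⊆ N ∧ S.lStable n d N ∧ S.rStable n d N}

/-- the idempotents `η_μ` for multipartitions `μ >_I λ` -/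
def hiSet [NeZero n] (lam : MultiComp ℓ n) : Set (TPow F (S.MBt n) d) :=
  {w | ∃ μ : MultiComp ℓ n, mcSize μ = d ∧ IsMultiPartition μ ∧
        leI S.po lam μ ∧ μ ≠ lam ∧ w = S.eta n d μ}

/-- the two-sided ideal `T^A(n,d)^{> λ}` -/
def idealHi [NeZero n] (lam : MultiComp ℓ n) : Submodule F (TPow F (S.MBt n) d) :=
  S.tIdeal n d (S.hiSet n d lam)

/-- the standard module `Δ(λ)` is the subquotient `D1 λ / D2 λ` of the regular module -/
def D1 [NeZero n] (lam : MultiComp ℓ n) : Submodule F (TPow F (S.MBt n) d) :=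
  S.lIdeal n d {S.eta n d lam}

def D2 [NeZero n] (lam : MultiComp ℓ n) : Submodule F (TPow F (S.MBt n) d) :=
  S.D1 n d lam ⊓ S.idealHi n d lam

/-- the right standard module `Δ^op(λ)` is the subquotient `R1 λ / R2 λ` -/
def R1 [NeZero n] (lam : MultiComp ℓ n) : Submodule F (TPow F (S.MBt n) d) :=
  S.rIdeal n d {S.eta n d lam}

def R2 [NeZero n] (lam : MultiComp ℓ n) : Submodule F (TPow F (S.MBt n) d) :=
  S.R1 n d lam ⊓ S.idealHi n d lam

end SchurAlgData

/-! ## Relational isomorphisms of subquotient supermodules -/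

/-- `SubQuotIso Ta evA odA aM aN evM odM evN odN Phi Plo Qhi Qlo ε` says that the
subquotient `Phi/Plo` (of an ambient module `M` on which the algebra elements act via
`aM`) is isomorphic, via a supermodule isomorphism of parity `ε`, to the subquotient
`Qhi/Qlo` (with action `aN`). Over a field, an isomorphism of subquotients is always
induced by an ambient linear map, which is how it is encoded here. -/
def SubQuotIso {F : Type} [CommRing F] {A M N : Type}
    [AddCommGroup M] [Module F M] [AddCommGroup N] [Module F N]
    (Ta evA odA : Set A) (aM : A → M →ₗ[F] M) (aN : A → N →ₗ[F] N)
    (evM odM : Set M) (evN odN : Set N)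
    (Phi Plo : Submodule F M) (Qhi Qlo : Submodule F N) (ε : Bool) : Prop :=
  Plo ≤ Phi ∧ Qlo ≤ Qhi ∧
  ∃ f : M →ₗ[F] N,
    (∀ v ∈ Phi, f v ∈ Qhi) ∧ (∀ v ∈ Plo, f v ∈ Qlo) ∧
    (∀ w ∈ Qhi, ∃ v ∈ Phi, f v - w ∈ Qlo) ∧
    (∀ v ∈ Phi, f v ∈ Qlo → v ∈ Plo) ∧
    (∀ x ∈ Ta ∩ evA, ∀ v ∈ Phi, f (aM x v) - aN x (f v) ∈ Qlo) ∧
    (∀ x ∈ Ta ∩ odA, ∀ v ∈ Phi,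
       f (aM x v) - (if ε then (-1 : F) else 1) • aN x (f v) ∈ Qlo) ∧
    (∀ v ∈ Phi, v ∈ evM → ∃ w ∈ (if ε then odN else evN), f v - w ∈ Qlo) ∧
    (∀ v ∈ Phi, v ∈ odM → ∃ w ∈ (if ε then evN else odN), f v - w ∈ Qlo)

/-! ## Supermodules over `T^A(n,d)`, filtrations and tilting modules -/

/-- a supermodule over `T^A(n,d)` presented in coordinates: a basis `βV` with
parities `pV` and the structure constants `actV` of the action of `M_n(A)` -/
structure ModSetting {F : Type} [CommRing F] {ℓ : ℕ} (S : SchurAlgData F ℓ) (n : ℕ) :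
    Type 1 where
  βV : Type
  finV : Fintype βV
  deqV : DecidableEq βV
  pV : βV → Fin 3
  actV : S.MBt n → βV → (βV →₀ F)

attribute [instance] ModSetting.finV ModSetting.deqV

namespace ModSetting

variable {F : Type} [CommRing F] {ℓ : ℕ} {S : SchurAlgData F ℓ} {n : ℕ}
variable (MS : ModSetting S n) (d : ℕ)

/-- the action of elements of (the ambient space of) `T^A(n,d)` -/
def act (x : TPow F (S.MBt n) d) : TPow F MS.βV d →ₗ[F] TPow F MS.βV d :=
  kact F (S.pM n) MS.pV MS.actV x

def evM : Set (TPow F MS.βV d) := (evenPart F MS.pV d : Set _)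

def odM : Set (TPow F MS.βV d) := (oddPart F MS.pV d : Set _)

def stable (N : Submodule F (TPow F MS.βV d)) : Prop :=
  ∀ x ∈ S.alg n d, ∀ v ∈ N, MS.act d x v ∈ N

/-- the factor `Whi/Wlo` is isomorphic (as a supermodule, up to parity shift)
to the standard module `Δ(λ)` -/
def stdFactorAt [NeZero n] (Whi Wlo : Submodule F (TPow F MS.βV d))
    (lam : MultiComp ℓ n) : Prop :=
  ∃ ε : Bool,
    SubQuotIso (S.alg n d : Set _) (S.evA n d) (S.odA n d)
      (MS.act d) (fun x => S.amul n d x)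
      (MS.evM d) (MS.odM d) (S.evA n d) (S.odA n d)
      Whi Wlo (S.D1 n d lam) (S.D2 n d lam) ε

/-- the factor `Whi/Wlo` is isomorphic (as a supermodule, up to parity shift) to the
costandard module `∇(λ) = (Δ^op(λ))^*`; this is encoded by a perfect contravariant
pairing with the right standard module `Δ^op(λ) = R1 λ / R2 λ`. -/
def nablaFactorAt [NeZero n] (Whi Wlo : Submodule F (TPow F MS.βV d))
    (lam : MultiComp ℓ n) : Prop :=
  ∃ ε : Bool, ∃ B : TPow F MS.βV d →ₗ[F] TPow F (S.MBt n) d →ₗ[F] F,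
    (∀ v ∈ Wlo, ∀ w ∈ S.R1 n d lam, B v w = 0) ∧
    (∀ v ∈ Whi, ∀ w ∈ S.R2 n d lam, B v w = 0) ∧
    (∀ v ∈ Whi, (∀ w ∈ S.R1 n d lam, B v w = 0) → v ∈ Wlo) ∧
    (∀ w ∈ S.R1 n d lam, (∀ v ∈ Whi, B v w = 0) → w ∈ S.R2 n d lam) ∧
    (∀ v ∈ Whi, ∀ pv : Bool, v ∈ (if pv then MS.odM d else MS.evM d) →
      ∀ w ∈ S.R1 n d lam, ∀ pw : Bool, w ∈ (if pw then S.odA n d else S.evA n d) →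
        ((pv != pw) ≠ ε → B v w = 0)) ∧
    (∀ x ∈ (S.alg n d : Set _), ∀ px : Bool, x ∈ (if px then S.odA n d else S.evA n d) →
      ∀ v ∈ Whi, ∀ pv : Bool, v ∈ (if pv then MS.odM d else MS.evM d) →
      ∀ w ∈ S.R1 n d lam, ∀ pw : Bool, w ∈ (if pw then S.odA n d else S.evA n d) →
        B (MS.act d x v) w =
          (if px && (pv != pw) then (-1 : F) else 1) * B v (S.ramul n d x w))

/-- a standard filtration of `hi/lo` with all factors of the form `Δ(λ)`, `λ ∈ allowed` -/
def IsStdFiltBy [NeZero n] (lo hi : Submodule F (TPow F MS.βV d))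
    (allowed : Set (MultiComp ℓ n)) : Prop :=
  ∃ L : ℕ, ∃ W : Fin (L+1) → Submodule F (TPow F MS.βV d),
    Monotone W ∧ W 0 = lo ∧ W (Fin.last L) = hi ∧
    (∀ r, MS.stable d (W r)) ∧
    ∀ r : Fin L, ∃ lam, lam ∈ allowed ∧ mcSize lam = d ∧ IsMultiPartition lam ∧
      MS.stdFactorAt d (W r.succ) (W r.castSucc) lam

/-- a costandard filtration of `hi/lo` -/
def IsCoStdFilt [NeZero n] (lo hi : Submodule F (TPow F MS.βV d)) : Prop :=
  ∃ L : ℕ, ∃ W : Fin (L+1) → Submodule F (TPow F MS.βV d),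
    Monotone W ∧ W 0 = lo ∧ W (Fin.last L) = hi ∧
    (∀ r, MS.stable d (W r)) ∧
    ∀ r : Fin L, ∃ lam : MultiComp ℓ n, mcSize lam = d ∧ IsMultiPartition lam ∧
      MS.nablaFactorAt d (W r.succ) (W r.castSucc) lam

/-- tilting supermodule: admits both a standard and a costandard filtration -/
def IsTilting [NeZero n] (V : Submodule F (TPow F MS.βV d)) : Prop :=
  MS.IsStdFiltBy d ⊥ V Set.univ ∧ MS.IsCoStdFilt d ⊥ V

/-- indecomposability (as a supermodule) -/
def Indec (V : Submodule F (TPow F MS.βV d)) : Prop :=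
  ¬ ∃ U U' : Submodule F (TPow F MS.βV d),
      MS.stable d U ∧ MS.stable d U' ∧ U ⊓ U' = ⊥ ∧ U ⊔ U' = V ∧ U ≠ ⊥ ∧ U' ≠ ⊥

/-- `V` is (a copy of) the indecomposable tilting supermodule `T(λ)`:
it is tilting, indecomposable, contains a copy of `Δ(λ)` such that the quotient has
a standard filtration with factors `Δ(μ)`, `μ < λ`. -/
def IsIndecTilting [NeZero n] (lam : MultiComp ℓ n)
    (V : Submodule F (TPow F MS.βV d)) : Prop :=
  MS.IsTilting d V ∧ MS.Indec d V ∧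
  ∃ U : Submodule F (TPow F MS.βV d), U ≤ V ∧ MS.stable d U ∧
    MS.stdFactorAt d U ⊥ lam ∧
    MS.IsStdFiltBy d U V {μ | leI S.po μ lam ∧ μ ≠ lam}

/-- full tilting supermodule: tilting, and every indecomposable tilting supermodule
`T(λ)` occurs as a direct summand -/
def IsFullTilting [NeZero n] (V : Submodule F (TPow F MS.βV d)) : Prop :=
  MS.IsTilting d V ∧
  ∀ lam : MultiComp ℓ n, mcSize lam = d → IsMultiPartition lam →
    ∃ U U' : Submodule F (TPow F MS.βV d),
      MS.stable d U ∧ MS.stable d U' ∧ U ⊓ U' = ⊥ ∧ U ⊔ U' = V ∧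
      MS.IsIndecTilting d lam U

end ModSetting

end

end Paper
namespace Paper

noncomputable section

/-! ## The extended zigzag algebra -/

variable (F : Type) [CommRing F] (ℓ : ℕ)

/-- the basis of the extended zigzag algebra `Z`:
`e i` (`i ∈ I`), `a_{j,j+1}`, `a_{j+1,j}`, `c j` (`j ∈ J`) -/
abbrev ZB := Fin (ℓ+1) ⊕ (Fin ℓ ⊕ (Fin ℓ ⊕ Fin ℓ))

variable {ℓ}

def eZ (i : Fin (ℓ+1)) : ZB ℓ := Sum.inl i
/-- the arrow `a_{j,j+1}` (target `j`, source `j+1`) -/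
def dZ (j : Fin ℓ) : ZB ℓ := Sum.inr (Sum.inl j)
/-- the arrow `a_{j+1,j}` (target `j+1`, source `j`) -/
def uZ (j : Fin ℓ) : ZB ℓ := Sum.inr (Sum.inr (Sum.inl j))
/-- the cycle `c_j = a_{j,j+1} a_{j+1,j}` -/
def cZ (j : Fin ℓ) : ZB ℓ := Sum.inr (Sum.inr (Sum.inr j))

def srcZ : ZB ℓ → Fin (ℓ+1)
  | Sum.inl i => i
  | Sum.inr (Sum.inl j) => j.succ
  | Sum.inr (Sum.inr (Sum.inl j)) => j.castSucc
  | Sum.inr (Sum.inr (Sum.inr j)) => j.castSucc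

def tgtZ : ZB ℓ → Fin (ℓ+1)
  | Sum.inl i => i
  | Sum.inr (Sum.inl j) => j.castSucc
  | Sum.inr (Sum.inr (Sum.inl j)) => j.succ
  | Sum.inr (Sum.inr (Sum.inr j)) => j.castSucc

/-- calibration of `Z`: `𝔞 = span(e_i)`, `𝔠 = span(c_j)`, odd part spanned by arrows -/
def pZ : ZB ℓ → Fin 3
  | Sum.inl _ => 0
  | Sum.inr (Sum.inr (Sum.inr _)) => 1
  | _ => 2

def ordZ : ZB ℓ → ℕ
  | Sum.inl i => (i : ℕ)
  | Sum.inr (Sum.inl j) => (ℓ+1) + (j : ℕ)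
  | Sum.inr (Sum.inr (Sum.inl j)) => (ℓ+1) + ℓ + (j : ℕ)
  | Sum.inr (Sum.inr (Sum.inr j)) => (ℓ+1) + 2*ℓ + (j : ℕ)

/-- structure constants of the extended zigzag algebra -/
def mulZ : ZB ℓ → ZB ℓ → (ZB ℓ →₀ F) := fun b b' =>
  if srcZ b = tgtZ b' then
    match b, b' with
    | Sum.inl _, y => Finsupp.single y 1
    | y, Sum.inl _ => Finsupp.single y 1
    | Sum.inr (Sum.inl j), Sum.inr (Sum.inr (Sum.inl _)) => Finsupp.single (cZ j) 1
    | Sum.inr (Sum.inr (Sum.inl j)), Sum.inr (Sum.inl _) =>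
        if h : (j : ℕ) + 1 < ℓ then Finsupp.single (cZ ⟨(j:ℕ)+1, h⟩) 1 else 0
    | _, _ => 0
  else 0

variable (ℓ) in
/-- the extended zigzag algebra, packaged as the data of a generalized Schur algebra;
the heredity order on `I = {0,…,ℓ}` is the natural total order -/
def zigData : SchurAlgData F ℓ :=
  ⟨ZB ℓ, inferInstance, inferInstance, pZ, ordZ, mulZ F, eZ, fun i j => i ≤ j⟩

/-! ## The full tilting `Z`-supermodule `𝖳` -/

variable (ℓ) in
/-- basis of `𝖳 = ΠL(0) ⊕ ⊕_{j ∈ J} Z e_j`: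
`u0` spans `Π𝖳(0) = ΠL(0)`; `Et j = e_j`, `Ct j = c_j`, `Ut j = a_{j+1,j}` and
`Dt t = a_{t,t+1}` (the latter lying in `Z e_{t+1}`) are the basis elements of the
left ideals `Z e_j = Π𝖳(j+1)`. -/
abbrev TB := Unit ⊕ (Fin ℓ ⊕ (Fin ℓ ⊕ (Fin ℓ ⊕ {t : Fin ℓ // (t : ℕ) + 1 < ℓ})))

def u0 : TB ℓ := Sum.inl ()
def Et (j : Fin ℓ) : TB ℓ := Sum.inr (Sum.inl j)
def Ct (j : Fin ℓ) : TB ℓ := Sum.inr (Sum.inr (Sum.inl j))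
def Ut (j : Fin ℓ) : TB ℓ := Sum.inr (Sum.inr (Sum.inr (Sum.inl j)))
def Dt (t : Fin ℓ) (h : (t : ℕ) + 1 < ℓ) : TB ℓ := Sum.inr (Sum.inr (Sum.inr (Sum.inr ⟨t, h⟩)))

/-- `compT x = i` when the basis vector `x` lies in the summand `Π𝖳(i)` of `𝖳` -/
def compT : TB ℓ → Fin (ℓ+1)
  | Sum.inl _ => 0
  | Sum.inr (Sum.inl j) => j.succ
  | Sum.inr (Sum.inr (Sum.inl j)) => j.succ
  | Sum.inr (Sum.inr (Sum.inr (Sum.inl j))) => j.succ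
  | Sum.inr (Sum.inr (Sum.inr (Sum.inr t))) => ⟨(t.1 : ℕ) + 2, by have := t.2; omega⟩

/-- calibration of `𝖳`: `𝖳_𝔞 = span(e_j)`, `𝖳_𝔠 = span(c_j)`,
odd part spanned by `u0` and the arrows -/
def pT : TB ℓ → Fin 3
  | Sum.inl _ => 2
  | Sum.inr (Sum.inl _) => 0
  | Sum.inr (Sum.inr (Sum.inl _)) => 1
  | Sum.inr (Sum.inr (Sum.inr _)) => 2

def ordT : TB ℓ → ℕ
  | Sum.inl _ => 0
  | Sum.inr (Sum.inl j) => 1 + (j : ℕ)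
  | Sum.inr (Sum.inr (Sum.inl j)) => 1 + ℓ + (j : ℕ)
  | Sum.inr (Sum.inr (Sum.inr (Sum.inl j))) => 1 + 2*ℓ + (j : ℕ)
  | Sum.inr (Sum.inr (Sum.inr (Sum.inr t))) => 1 + 3*ℓ + (t.1 : ℕ)

/-- underlying element of `Z` of a non-`u0` basis vector of `𝖳` -/
def toZ : TB ℓ → Option (ZB ℓ)
  | Sum.inl _ => none
  | Sum.inr (Sum.inl j) => some (eZ j.castSucc)
  | Sum.inr (Sum.inr (Sum.inl j)) => some (cZ j)
  | Sum.inr (Sum.inr (Sum.inr (Sum.inl j))) => some (uZ j)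
  | Sum.inr (Sum.inr (Sum.inr (Sum.inr t))) => some (dZ t.1)

/-- encoding of elements of the left ideals `Z e_j` (`j ∈ J`) back into `TB` -/
def encB : ZB ℓ → Option (TB ℓ)
  | Sum.inl i => if h : (i : ℕ) < ℓ then some (Et ⟨i, h⟩) else none
  | Sum.inr (Sum.inl t) => if h : (t : ℕ) + 1 < ℓ then some (Dt t h) else none
  | Sum.inr (Sum.inr (Sum.inl j)) => some (Ut j)
  | Sum.inr (Sum.inr (Sum.inr j)) => some (Ct j)

def pushEnc (f : ZB ℓ →₀ F) : TB ℓ →₀ F :=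
  f.sum fun b r =>
    match encB b with
    | Option.some t => Finsupp.single t r
    | Option.none => 0

/-- structure constants of the left `Z`-action on `𝖳` -/
def actT : ZB ℓ → TB ℓ → (TB ℓ →₀ F) := fun z t =>
  match toZ t with
  | Option.none => if z = eZ (0 : Fin (ℓ+1)) then Finsupp.single u0 1 else 0
  | Option.some zb => pushEnc F (mulZ F z zb)

/-- structure constants of the right action on `𝖳` of the Ringel dual `Z' ≅ Z`
(the basis of `Z'` being identified with `ZB` via `e_i ↦ e'_i`, `a ↦ a'`, `c ↦ c'`) -/
def ractT : TB ℓ → ZB ℓ → (TB ℓ →₀ F) := fun t z =>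
  match z with
  | Sum.inl i =>
      match t with
      | Sum.inl _ => if (i : ℕ) = ℓ then Finsupp.single u0 1 else 0
      | t' =>
          match toZ t' with
          | Option.some zb => if (i : ℕ) + (srcZ zb : ℕ) + 1 = ℓ then Finsupp.single t' 1 else 0
          | Option.none => 0
  | Sum.inr (Sum.inr (Sum.inr i)) =>  -- c'_i
      match t with
      | Sum.inr (Sum.inl j) => if (i : ℕ) + (j : ℕ) + 1 = ℓ then Finsupp.single (Ct j) 1 else 0
      | _ => 0
  | Sum.inr (Sum.inr (Sum.inl i)) =>  -- a'_{i+1,i} (resp. a'_{ℓ,ℓ-1} for i = ℓ-1)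
      match t with
      | Sum.inl _ => if h : (i : ℕ) + 1 = ℓ then -(Finsupp.single (Ct ⟨0, by omega⟩) (1 : F)) else 0
      | Sum.inr (Sum.inl p) =>
          if h : (i : ℕ) + (p : ℕ) + 2 = ℓ then Finsupp.single (Dt p (by omega)) 1 else 0
      | Sum.inr (Sum.inr (Sum.inr (Sum.inl p))) =>
          if h : (i : ℕ) + (p : ℕ) + 2 = ℓ then Finsupp.single (Ct ⟨(p : ℕ) + 1, by omega⟩) 1 else 0
      | _ => 0
  | Sum.inr (Sum.inl i) =>  -- a'_{i,i+1} (resp. a'_{ℓ-1,ℓ} for i = ℓ-1)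
      match t with
      | Sum.inr (Sum.inl q) =>
          if h : (i : ℕ) + (q : ℕ) + 1 = ℓ then
            (if h0 : (q : ℕ) = 0 then Finsupp.single u0 1
             else Finsupp.single (Ut ⟨(q : ℕ) - 1, by omega⟩) 1)
          else 0
      | Sum.inr (Sum.inr (Sum.inr (Sum.inr tt))) =>
          if (i : ℕ) + (tt.1 : ℕ) + 2 = ℓ then Finsupp.single (Ct tt.1) 1 else 0
      | _ => 0

/-! ## `M_n(𝖳)` and the bisupermodule `𝒯` -/

variable (ℓ) in
/-- the basis of `M_n(𝖳)` -/
abbrev MTB (n : ℕ) := TB ℓ × Fin n × Fin n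

def pMT {n : ℕ} : MTB ℓ n → Fin 3 := fun m => pT m.1

def ordMT {n : ℕ} : MTB ℓ n → ℕ := fun m => (ordT m.1 * n + (m.2.1 : ℕ)) * n + (m.2.2 : ℕ)

/-- the left action of the basis of `M_n(Z)` on the basis of `M_n(𝖳)` -/
def lactMT {n : ℕ} : (zigData F ℓ).MBt n → MTB ℓ n → (MTB ℓ n →₀ F) := fun x m =>
  if x.2.2 = m.2.1 then Finsupp.mapDomain (fun t => (t, x.2.1, m.2.2)) (actT F x.1 m.1) else 0

/-- the right action of the basis of `M_n(Z')` on the basis of `M_n(𝖳)` -/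
def rmtT {n : ℕ} : MTB ℓ n → (zigData F ℓ).MBt n → (MTB ℓ n →₀ F) := fun m x =>
  if m.2.2 = x.2.1 then Finsupp.mapDomain (fun t => (t, m.2.1, x.2.2)) (ractT F m.1 x.1) else 0

/-- the left action on the column module `Col_n(𝖳)` -/
def lactCol {n : ℕ} : (zigData F ℓ).MBt n → (TB ℓ × Fin n) → ((TB ℓ × Fin n) →₀ F) := fun x c =>
  if x.2.2 = c.2 then Finsupp.mapDomain (fun t => (t, x.2.1)) (actT F x.1 c.1) else 0

variable (ℓ) in
/-- `M_n(𝖳)` as a supermodule over `T^Z(n,d)`, in coordinates -/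
def fullMS (n : ℕ) : ModSetting (zigData F ℓ) n :=
  ⟨MTB ℓ n, inferInstance, inferInstance, pMT, lactMT F⟩

variable (ℓ) in
/-- `Col_n(𝖳)` as a supermodule over `T^Z(n,d)`, in coordinates -/
def colMS (n : ℕ) : ModSetting (zigData F ℓ) n :=
  ⟨TB ℓ × Fin n, inferInstance, inferInstance, fun c => pT c.1, lactCol F⟩

variable (ℓ) in
/-- the `(T^Z(n,d), T^{Z'}(n,d))`-bisupermodule `𝒯 = Γ̃^d M_n(𝖳)` (over `F`) -/
def scrT (n d : ℕ) : Submodule F (TPow F (MTB ℓ n) d) :=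
  gammaTilde F (stdFam F pMT ordMT) d

variable (ℓ) in
/-- the right action of (the ambient space of) `T^{Z'}(n,d)` on the ambient space of `𝒯` -/
def rActT (n d : ℕ) (x : TPow F ((zigData F ℓ).MBt n) d) :
    TPow F (MTB ℓ n) d →ₗ[F] TPow F (MTB ℓ n) d :=
  rkact F ((zigData F ℓ).pM n) pMT (rmtT F) x

variable (ℓ) in
/-- the calibrated family presenting `Col_n(Π𝖳(i))` inside `Col_n(𝖳)` -/
def colFam (n : ℕ) (i : Fin (ℓ+1)) : CalFamily F (TB ℓ × Fin n) :=
  ⟨{x : TB ℓ × Fin n // compT x.1 = i}, inferInstance, inferInstance,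
   fun x => pT x.1.1, fun x => ordT x.1.1 * n + (x.1.2 : ℕ), fun x => Finsupp.single x.1 1⟩

variable (ℓ) in
/-- the tilting supermodule `𝒯^d_i = Γ̃^d Col_n(Π𝖳(i))` over `T^Z(n,d)` -/
def scrTi (n d : ℕ) (i : Fin (ℓ+1)) : Submodule F (TPow F (TB ℓ × Fin n) d) :=
  gammaTilde F (colFam F ℓ n i) d

end

end Paper
namespace Paper

noncomputable section Faithful

open Finsupp

variable {K : Type} [Field K]

/-! ### Generic coefficient lemmas -/

lemma tensorOf_apply {β : Type} [Fintype β] [DecidableEq β] {d : ℕ}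
    (v : Fin d → (β →₀ K)) (m : Fin d → β) :
    tensorOf K v m = ∏ i, v i (m i) := by
  classical
  unfold tensorOf
  rw [Finsupp.finset_sum_apply]
  by_cases hm : ∀ i, m i ∈ (v i).support
  · rw [Finset.sum_eq_single m]
    · simp
    · intro k _ hkm
      simp [Finsupp.single_apply, hkm]
    · intro hmem
      exact absurd (Fintype.mem_piFinset.mpr hm) hmem
  · push_neg at hm
    obtain ⟨i, hi⟩ := hm
    have hv : v i (m i) = 0 := Finsupp.notMem_support_iff.mp hi
    rw [Finset.sum_eq_zero, eq_comm]
    · exact Finset.prod_eq_zero (Finset.mem_univ i) hv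
    · intro k hk
      have hne : k ≠ m := by
        rintro rfl
        exact hi (Fintype.mem_piFinset.mp hk i)
      simp [Finsupp.single_apply, hne]

lemma tensorOf_single {β : Type} [Fintype β] [DecidableEq β] {d : ℕ} (b : Fin d → β) :
    tensorOf K (fun i => Finsupp.single (b i) (1 : K)) = Finsupp.single b 1 := by
  classical
  ext m
  rw [tensorOf_apply]
  rcases eq_or_ne b m with rfl | h
  · simp [Finsupp.single_apply]
  · obtain ⟨i, hi⟩ := Function.ne_iff.mp h
    rw [Finsupp.single_apply, if_neg h]
    exact Finset.prod_eq_zero (Finset.mem_univ i) (by simp [Finsupp.single_apply, hi])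

lemma mfac_injective {β : Type} [Fintype β] [DecidableEq β] (Fam : CalFamily K β) {d : ℕ}
    {b : Fin d → Fam.ι} (hb : Function.Injective b) : Fam.mfac b = 1 := by
  classical
  unfold CalFamily.mfac
  refine Finset.prod_eq_one fun c _ => ?_
  have hcard : (Finset.univ.filter fun i : Fin d => b i = c).card ≤ 1 := by
    refine Finset.card_le_one.mpr fun i hi j hj => ?_
    exact hb ((Finset.mem_filter.mp hi).2.trans (Finset.mem_filter.mp hj).2.symm)
  rcases Nat.le_one_iff_eq_zero_or_eq_one.mp hcard with h | h <;> simp [h]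

lemma mem_orbit_self {β : Type} [Fintype β] [DecidableEq β] (Fam : CalFamily K β) {d : ℕ}
    (b : Fin d → Fam.ι) : b ∈ Fam.orbit b := by
  classical
  refine Finset.mem_filter.mpr ⟨Finset.mem_univ _, ⟨1, ?_⟩⟩
  funext i
  simp

/-! ### Master faithfulness lemma -/

lemma master {β α : Type} [Fintype β] [DecidableEq β] {d : ℕ}
    (pβ : β → Fin 3) (oβ : β → ℕ)
    (sgn : (Fin d → α) → (Fin d → β) → ℕ) (ent : α → β → (β →₀ K))
    (x : (Fin d → α) →₀ K)
    (L : TPow K β d →ₗ[K] TPow K β d)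
    (hL : ∀ b' : Fin d → β, L (Finsupp.single b' 1) =
      x.sum fun aa r => (r * (-1 : K) ^ sgn aa b') • tensorOf K fun i => ent (aa i) (b' i))
    (k m : Fin d → β) (hk : Function.Injective k)
    (a : Fin d → α)
    (hdiag : ∀ i : Fin d, ∀ a' : α, (ent a' (k i)) (m i) ≠ 0 → a' = a i)
    (hnz : ∀ i : Fin d, (ent (a i) (k i)) (m i) ≠ 0)
    (hoff : ∀ i j : Fin d, i ≠ j → ∀ a' : α, (ent a' (k j)) (m i) = 0)
    (h0 : L ((stdFam K pβ oβ).y k) = 0) :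
    x a = 0 := by
  classical
  set Fam := stdFam K pβ oβ with hFam
  have hy : Fam.y k = ∑ b' ∈ Fam.orbit k,
      ((-1 : K) ^ (Fam.inversions k + Fam.inversions b')) • Finsupp.single b' (1 : K) := by
    simp only [CalFamily.y, mfac_injective Fam hk, one_nsmul, CalFamily.x]
    refine Finset.sum_congr rfl fun b' _ => ?_
    erw [show (fun i => Fam.vec (b' i)) = fun i => Finsupp.single (b' i) (1 : K) from rfl,
      tensorOf_single]; exact rfl
  have h0m : (0 : K) = ∑ b' ∈ Fam.orbit k,
      ((-1 : K) ^ (Fam.inversions k + Fam.inversions b')) * (L (Finsupp.single b' 1)) m := by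
    calc (0 : K) = (L (Fam.y k)) m := by rw [h0]; simp
    _ = _ := by
      rw [hy]; erw [map_sum, Finsupp.finset_sum_apply]
      refine Finset.sum_congr rfl fun b' _ => ?_
      erw [map_smul, Finsupp.smul_apply, smul_eq_mul]; exact rfl
  have hg0 : ∀ b' ∈ Fam.orbit k, b' ≠ k → (L (Finsupp.single b' (1 : K))) m = 0 := by
    intro b' hb' hne
    obtain ⟨σ, rfl⟩ := (Finset.mem_filter.mp hb').2
    have hex : ∃ i, k (σ i) ≠ k i := by
      by_contra hcon
      push_neg at hcon
      exact hne (funext fun i => hcon i)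
    obtain ⟨i, hi⟩ := hex
    have hσ : σ i ≠ i := fun hh => hi (by rw [hh])
    erw [hL, Finsupp.sum_apply, Finsupp.sum]
    simp only [Finsupp.smul_apply, tensorOf_apply, smul_eq_mul]
    refine Finset.sum_eq_zero fun aa _ => ?_
    rw [Finset.prod_eq_zero (Finset.mem_univ i) (hoff i (σ i) (Ne.symm hσ) (aa i)), mul_zero]
  have hone : ((-1 : K) ^ (Fam.inversions k + Fam.inversions k)) = 1 :=
    Even.neg_one_pow ⟨Fam.inversions k, rfl⟩
  have hsum : (0 : K) = (L (Finsupp.single k (1 : K))) m := by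
    have hcol : ∑ b' ∈ Fam.orbit k,
        ((-1 : K) ^ (Fam.inversions k + Fam.inversions b')) * (L (Finsupp.single b' 1)) m
        = ((-1 : K) ^ (Fam.inversions k + Fam.inversions k)) * (L (Finsupp.single k 1)) m :=
      Finset.sum_eq_single_of_mem k (mem_orbit_self Fam k)
        (fun b' hb' hne => by rw [hg0 b' hb' hne, mul_zero])
    rw [h0m, hcol, hone, one_mul]
  have hfin : (L (Finsupp.single k (1 : K))) m
      = x a * ((-1 : K) ^ sgn a k * ∏ i, (ent (a i) (k i)) (m i)) := by
    rw [hL, Finsupp.sum_apply, Finsupp.sum]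
    simp only [Finsupp.smul_apply, tensorOf_apply, smul_eq_mul]
    refine (Finset.sum_eq_single a (fun aa _ hne => ?_) (fun ha => ?_)).trans ?_
    · obtain ⟨i, hi⟩ := Function.ne_iff.mp hne
      rw [Finset.prod_eq_zero (Finset.mem_univ i) (by
          by_contra hcon
          exact hi (hdiag i (aa i) hcon)), mul_zero]
    · rw [Finsupp.notMem_support_iff.mp ha, zero_mul, zero_mul]
    · ring
  have hc : ((-1 : K) ^ sgn a k * ∏ i, (ent (a i) (k i)) (m i)) ≠ 0 :=
    mul_ne_zero (pow_ne_zero _ (by norm_num)) (Finset.prod_ne_zero_iff.mpr fun i _ => hnz i)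
  have := hfin ▸ hsum
  exact (mul_eq_zero.mp this.symm).resolve_right hc

end Faithful


noncomputable section Faithful2

open Finsupp

variable {F : Type} [Field F] {ℓ : ℕ}

/-- test vector (in `TB`) for detecting the basis element `z` of `Z` via the left action -/
def testL (hl : 0 < ℓ) : ZB ℓ → TB ℓ
  | Sum.inl i => if h : (i : ℕ) < ℓ then Et ⟨i, h⟩ else Ut ⟨ℓ - 1, by omega⟩
  | Sum.inr (Sum.inl t) =>
      if h : (t : ℕ) + 1 < ℓ then Et ⟨(t : ℕ) + 1, h⟩ else Ut ⟨ℓ - 1, by omega⟩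
  | Sum.inr (Sum.inr (Sum.inl j)) => Et j
  | Sum.inr (Sum.inr (Sum.inr j)) => Et j

/-- the corresponding output basis vector `z · testL z` -/
def outL (hl : 0 < ℓ) : ZB ℓ → TB ℓ
  | Sum.inl i => if h : (i : ℕ) < ℓ then Et ⟨i, h⟩ else Ut ⟨ℓ - 1, by omega⟩
  | Sum.inr (Sum.inl t) => if h : (t : ℕ) + 1 < ℓ then Dt t h else Ct t
  | Sum.inr (Sum.inr (Sum.inl j)) => Ut j
  | Sum.inr (Sum.inr (Sum.inr j)) => Ct j

/-- test vector for detecting the basis element `z'` of `Z'` via the right action -/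
def testR (hl : 0 < ℓ) : ZB ℓ → TB ℓ
  | Sum.inl i => if h : (i : ℕ) < ℓ then Et ⟨ℓ - 1 - i, by omega⟩ else u0
  | Sum.inr (Sum.inl i) => Et ⟨ℓ - 1 - (i : ℕ), by omega⟩
  | Sum.inr (Sum.inr (Sum.inl i)) =>
      if h : (i : ℕ) + 1 < ℓ then Et ⟨ℓ - 2 - (i : ℕ), by omega⟩ else u0
  | Sum.inr (Sum.inr (Sum.inr i)) => Et ⟨ℓ - 1 - (i : ℕ), by omega⟩

/-- the corresponding output basis vector for the right action -/
def outR (hl : 0 < ℓ) : ZB ℓ → TB ℓ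
  | Sum.inl i => if h : (i : ℕ) < ℓ then Et ⟨ℓ - 1 - i, by omega⟩ else u0
  | Sum.inr (Sum.inl i) =>
      if h0 : ℓ - 1 - (i : ℕ) = 0 then u0 else Ut ⟨ℓ - 2 - (i : ℕ), by omega⟩
  | Sum.inr (Sum.inr (Sum.inl i)) =>
      if h : (i : ℕ) + 1 < ℓ then
        Dt ⟨ℓ - 2 - (i : ℕ), by omega⟩ (show ℓ - 2 - (i : ℕ) + 1 < ℓ by omega)
      else Ct ⟨0, hl⟩
  | Sum.inr (Sum.inr (Sum.inr i)) => Ct ⟨ℓ - 1 - (i : ℕ), by omega⟩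

lemma uniq_left_ne (hl : 0 < ℓ) {z z' : ZB ℓ} (h : z ≠ z') :
    (actT F z (testL hl z')) (outL hl z') = 0 := by
  rcases z' with i' | t' | j' | j' <;> rcases z with i | t | j | j <;>
    simp only [testL, outL] <;> (try split_ifs) <;>
    simp_all [actT, toZ, mulZ, pushEnc, encB, srcZ, tgtZ, eZ, dZ, uZ, cZ, Et, Ut, Dt, Ct, u0,
      Fin.val_succ, Fin.coe_castSucc, Finsupp.sum_single_index, Finsupp.single_apply,
      Fin.ext_iff, Finsupp.sum_zero_index] <;> (try split_ifs) <;>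
    (try simp_all [pushEnc, encB, dZ, uZ, cZ, Et, Ut, Dt, Ct, u0, Fin.ext_iff,
      Finsupp.sum_single_index, Finsupp.sum_zero_index, Finsupp.single_apply]) <;>
    (try omega)

lemma uniq_left_self (hl : 0 < ℓ) (z : ZB ℓ) :
    (actT F z (testL hl z)) (outL hl z) = (1 : F) := by
  rcases z with i | t | j | j
  · rcases Nat.lt_or_ge (i : ℕ) ℓ with hi | hi
    · simp [testL, outL, hi, actT, toZ, mulZ, pushEnc, encB, srcZ, tgtZ, eZ, Et, Ut,
        Finsupp.sum_single_index, Finsupp.single_apply, Fin.ext_iff]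
    · have hi' : ¬ ((i : ℕ) < ℓ) := by omega
      have hieq : (i : ℕ) = ℓ - 1 + 1 := by omega
      simp only [testL, outL, dif_neg hi']
      simp [actT, toZ, mulZ, pushEnc, encB, srcZ, tgtZ, eZ, uZ, Et, Ut, Fin.val_succ, hieq,
        Finsupp.sum_single_index, Finsupp.single_apply, Fin.ext_iff]
  · rcases Nat.lt_or_ge ((t : ℕ) + 1) ℓ with ht | ht
    · simp [testL, outL, ht, actT, toZ, mulZ, pushEnc, encB, srcZ, tgtZ, eZ, dZ, Et, Ut, Dt, Ct,
        Finsupp.sum_single_index, Finsupp.single_apply, Fin.ext_iff]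
    · have ht' : ¬ ((t : ℕ) + 1 < ℓ) := by omega
      have hteq : (t : ℕ) = ℓ - 1 := by omega
      simp only [testL, outL, dif_neg ht']
      simp [actT, toZ, mulZ, pushEnc, encB, srcZ, tgtZ, eZ, dZ, uZ, cZ, Et, Ut, Dt, Ct,
        Fin.val_succ, hteq, Finsupp.sum_single_index, Finsupp.single_apply, Fin.ext_iff]
  · simp [testL, outL, actT, toZ, mulZ, pushEnc, encB, srcZ, tgtZ, eZ, uZ, Et, Ut,
      Finsupp.sum_single_index, Finsupp.single_apply, Fin.ext_iff]
  · simp [testL, outL, actT, toZ, mulZ, pushEnc, encB, srcZ, tgtZ, eZ, cZ, Et, Ct,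
      Finsupp.sum_single_index, Finsupp.single_apply, Fin.ext_iff]

lemma uniq_right_ne (hl : 0 < ℓ) {z z' : ZB ℓ} (h : z ≠ z') :
    (ractT F (testR hl z') z) (outR hl z') = 0 := by
  rcases z' with i' | t' | j' | j' <;> rcases z with i | t | j | j <;>
    simp only [testR, outR] <;> (try split_ifs) <;>
    simp_all [ractT, toZ, srcZ, Et, Ut, Dt, Ct, u0, eZ, dZ, uZ, cZ,
      Fin.val_succ, Fin.coe_castSucc, Finsupp.single_apply, Fin.ext_iff] <;>
    (try split_ifs) <;>
    (try simp_all [Et, Ut, Dt, Ct, u0, Fin.ext_iff, Finsupp.single_apply]) <;>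
    (try omega)

lemma uniq_right_self (hl : 0 < ℓ) (z : ZB ℓ) :
    (ractT F (testR hl z) z) (outR hl z) ≠ (0 : F) := by
  rcases z with i | t | j | j <;>
    simp only [testR, outR] <;> (try split_ifs) <;>
    simp_all [ractT, toZ, srcZ, Et, Ut, Dt, Ct, u0, eZ, dZ, uZ, cZ,
      Fin.val_succ, Fin.coe_castSucc, Finsupp.single_apply, Fin.ext_iff] <;>
    (try split_ifs) <;>
    (try simp_all [Et, Ut, Dt, Ct, u0, Fin.ext_iff, Finsupp.single_apply]) <;>
    (try omega)

variable {n : ℕ}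

lemma lactMT_coeff (a : (zigData F ℓ).MBt n) (t : TB ℓ) (p q : Fin n)
    (o : TB ℓ) (r' q' : Fin n) :
    (lactMT F a (t, p, q)) (o, r', q') =
      if a.2.2 = p ∧ a.2.1 = r' ∧ q = q' then (actT F a.1 t) o else 0 := by
  obtain ⟨z, r, s⟩ := a
  have hinj : Function.Injective (fun t' : TB ℓ => ((t', r, q) : MTB ℓ n)) := by
    intro t1 t2 hh
    simpa using hh
  simp only [lactMT]
  split_ifs with h1 h2 h2
  · obtain ⟨-, h22, h23⟩ := h2
    subst h22; subst h23
    exact Finsupp.mapDomain_apply hinj (actT F z t) o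
  · refine Finsupp.mapDomain_notin_range _ _ fun hr => ?_
    obtain ⟨t'', ht''⟩ := hr
    apply h2
    refine ⟨h1, ?_, ?_⟩ <;> cases ht'' <;> rfl
  · exact absurd h2.1 h1
  · rfl

lemma rmtT_coeff (t : TB ℓ) (p q : Fin n) (a : (zigData F ℓ).MBt n)
    (o : TB ℓ) (p' s' : Fin n) :
    (rmtT F (t, p, q) a) (o, p', s') =
      if q = a.2.1 ∧ p = p' ∧ a.2.2 = s' then (ractT F t a.1) o else 0 := by
  obtain ⟨z, r, s⟩ := a
  have hinj : Function.Injective (fun t' : TB ℓ => ((t', p, s) : MTB ℓ n)) := by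
    intro t1 t2 hh
    simpa using hh
  simp only [rmtT]
  split_ifs with h1 h2 h2
  · obtain ⟨-, h22, h23⟩ := h2
    subst h22; subst h23
    exact Finsupp.mapDomain_apply hinj (ractT F t z) o
  · refine Finsupp.mapDomain_notin_range _ _ fun hr => ?_
    obtain ⟨t'', ht''⟩ := hr
    apply h2
    refine ⟨h1, ?_, ?_⟩ <;> cases ht'' <;> rfl
  · exact absurd h2.1 h1
  · rfl

end Faithful2


/-!
STATEMENT 4: Let `F` be a field which is a module over a characteristic-0 PID `R`,
and `d ≤ n`. Then `𝒯` is faithful both as a left `T^Z(n,d)`-supermodule and as a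
right `T^{Z'}(n,d)`-supermodule. (The Ringel dual `Z'` is identified with `Z` via the
isomorphism `e_i ↦ e'_i`, `a ↦ a'`, `c ↦ c'`, so that `T^{Z'}(n,d)` has the same
coordinate presentation as `T^Z(n,d)`, and the right action of its basis on `𝖳` is
given by the structure constants `ractT`.)
-/
theorem statement4
    (R : Type) [CommRing R] [IsDomain R] [IsPrincipalIdealRing R] [CharZero R]
    (F : Type) [Field F] [Algebra R F]
    (ℓ n d : ℕ) [NeZero n] (hℓ : 1 ≤ ℓ) (hdn : d ≤ n) :
    (∀ x ∈ (zigData F ℓ).alg n d,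
      (∀ v ∈ scrT F ℓ n d, (fullMS F ℓ n).act d x v = 0) → x = 0) ∧
    (∀ x ∈ (zigData F ℓ).alg n d,
      (∀ v ∈ scrT F ℓ n d, rActT F ℓ n d x v = 0) → x = 0) := by
  have hl : 0 < ℓ := hℓ
  constructor
  · intro x _ H
    refine Finsupp.ext fun a => ?_
    rw [Finsupp.zero_apply]
    have hk : Function.Injective
        (fun i : Fin d => ((testL hl (a i).1, (a i).2.2, Fin.castLE hdn i) : MTB ℓ n)) := by
      intro i j hij
      exact Fin.castLE_injective hdn (congrArg (fun p : MTB ℓ n => p.2.2) hij)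
    have hseq : (stdFam F pMT ordMT).IsSeq
        (fun i : Fin d => ((testL hl (a i).1, (a i).2.2, Fin.castLE hdn i) : MTB ℓ n)) :=
      fun i j hij heq => absurd (hk heq) hij
    refine master (K := F) pMT ordMT
      (fun aa kk => koszul ((zigData F ℓ).pM n) pMT aa kk) (lactMT F) x
      ((fullMS F ℓ n).act d x) ?_
      (fun i => (testL hl (a i).1, (a i).2.2, Fin.castLE hdn i))
      (fun i => (outL hl (a i).1, (a i).2.1, Fin.castLE hdn i))
      hk a ?_ ?_ ?_ (H _ (Submodule.subset_span ⟨_, hseq, rfl⟩))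
    · intro b'
      show (kact F ((zigData F ℓ).pM n) pMT (lactMT F) x) (Finsupp.single b' 1) = _
      rw [kact, Finsupp.lsum_single, LinearMap.toSpanSingleton_apply_one]
    · intro i a' hne
      obtain ⟨z, r, s⟩ := a'
      rw [lactMT_coeff] at hne
      split_ifs at hne with hcond
      · obtain ⟨h1, h2, -⟩ := hcond
        have hz : z = (a i).1 := by
          by_contra hzz
          exact hne (uniq_left_ne hl hzz)
        exact Prod.ext_iff.mpr ⟨hz, Prod.ext_iff.mpr ⟨h2, h1⟩⟩
      · exact absurd rfl hne
    · intro i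
      show (lactMT F (a i) (testL hl (a i).1, (a i).2.2, Fin.castLE hdn i))
          (outL hl (a i).1, (a i).2.1, Fin.castLE hdn i) ≠ 0
      rw [lactMT_coeff, if_pos ⟨rfl, rfl, rfl⟩,
        (uniq_left_self hl (a i).1 : (actT F (a i).1 (testL hl (a i).1)) (outL hl (a i).1) = 1)]
      exact one_ne_zero
    · intro i j hij a'
      show (lactMT F a' (testL hl (a j).1, (a j).2.2, Fin.castLE hdn j))
          (outL hl (a i).1, (a i).2.1, Fin.castLE hdn i) = 0
      rw [lactMT_coeff, if_neg]
      rintro ⟨-, -, h3⟩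
      exact hij (Fin.castLE_injective hdn h3).symm
  · intro x _ H
    refine Finsupp.ext fun a => ?_
    rw [Finsupp.zero_apply]
    have hk : Function.Injective
        (fun i : Fin d => ((testR hl (a i).1, Fin.castLE hdn i, (a i).2.1) : MTB ℓ n)) := by
      intro i j hij
      exact Fin.castLE_injective hdn (congrArg (fun p : MTB ℓ n => p.2.1) hij)
    have hseq : (stdFam F pMT ordMT).IsSeq
        (fun i : Fin d => ((testR hl (a i).1, Fin.castLE hdn i, (a i).2.1) : MTB ℓ n)) :=
      fun i j hij heq => absurd (hk heq) hij
    refine master (K := F) pMT ordMT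
      (fun aa kk => koszul pMT ((zigData F ℓ).pM n) kk aa) (fun aa t => rmtT F t aa) x
      (rActT F ℓ n d x) ?_
      (fun i => (testR hl (a i).1, Fin.castLE hdn i, (a i).2.1))
      (fun i => (outR hl (a i).1, Fin.castLE hdn i, (a i).2.2))
      hk a ?_ ?_ ?_ (H _ (Submodule.subset_span ⟨_, hseq, rfl⟩))
    · intro b'
      show (rkact F ((zigData F ℓ).pM n) pMT (rmtT F) x) (Finsupp.single b' 1) = _
      rw [rkact, Finsupp.lsum_single, LinearMap.toSpanSingleton_apply_one]
    · intro i a' hne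
      obtain ⟨z, r, s⟩ := a'
      rw [rmtT_coeff] at hne
      split_ifs at hne with hcond
      · obtain ⟨h1, -, h3⟩ := hcond
        have hz : z = (a i).1 := by
          by_contra hzz
          exact hne (uniq_right_ne hl hzz)
        exact Prod.ext_iff.mpr ⟨hz, Prod.ext_iff.mpr ⟨h1.symm, h3⟩⟩
      · exact absurd rfl hne
    · intro i
      show (rmtT F (testR hl (a i).1, Fin.castLE hdn i, (a i).2.1) (a i))
          (outR hl (a i).1, Fin.castLE hdn i, (a i).2.2) ≠ 0
      rw [rmtT_coeff, if_pos ⟨rfl, rfl, rfl⟩]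
      exact uniq_right_self hl (a i).1
    · intro i j hij a'
      show (rmtT F (testR hl (a j).1, Fin.castLE hdn j, (a j).2.1) a')
          (outR hl (a i).1, Fin.castLE hdn i, (a i).2.2) = 0
      rw [rmtT_coeff, if_neg]
      rintro ⟨-, h2, -⟩
      exact hij (Fin.castLE_injective hdn h2).symm

end Paper
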